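/- Let φ be a circulation-free positive flow and let ab be an arc in the support of φ. Then there exists a basic feasible solution f with f_{ab} > 0 such that min_{e ∈ supp f} φ_e ≥ (b*_min / b*_max) · φ_{ab} / |supp φ|. -/

import Mathlib

open scoped BigOperators

section PhysarumSetup

variable {V E : Type*} [Fintype V] [Fintype E] [DecidableEq V] [DecidableEq E]

/-- Incidence (boundary) matrix of the digraph given by `tail`/`head`:
`+1` if `i` is the tail of `e`, `-1` if `i` is the head of `e`, `0` otherwise. -/
def incMatrix (tail head : E → V) : Matrix V E ℝ :=
  Matrix.of fun i e => if tail e = i then (1 : ℝ) else if head e = i then -1 else 0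

/-- The digraph has no loops. -/
def NoLoops (tail head : E → V) : Prop := ∀ e, tail e ≠ head e

/-- The digraph has no multiple arcs. -/
def NoMultiple (tail head : E → V) : Prop :=
  ∀ e f, tail e = tail f → head e = head f → e = f

/-- Adjacency in the underlying undirected graph. -/
def Adj (tail head : E → V) (i j : V) : Prop :=
  ∃ e, (tail e = i ∧ head e = j) ∨ (tail e = j ∧ head e = i)

/-- The underlying undirected graph is connected. -/
def IsConnectedGraph (tail head : E → V) : Prop :=
  ∀ i j : V, Relation.ReflTransGen (Adj tail head) i j

/-- `φ` is a flow with source vector `b`: `Bφ = b`. -/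
def IsFlow (tail head : E → V) (b : V → ℝ) (φ : E → ℝ) : Prop :=
  (incMatrix tail head).mulVec φ = b

/-- Net supply `b(S)` of a vertex set `S`. -/
def netSupply (b : V → ℝ) (S : Finset V) : ℝ := ∑ i ∈ S, b i

/-- `b*_max = max_{S ⊆ V} |b(S)|`. -/
noncomputable def bstarMax (b : V → ℝ) : ℝ :=
  sSup {x | ∃ S : Finset V, x = |netSupply b S|}

/-- `b*_min = min { |b(S)| : S ⊆ V, b(S) ≠ 0 }`. -/
noncomputable def bstarMin (b : V → ℝ) : ℝ :=
  sInf {x | ∃ S : Finset V, netSupply b S ≠ 0 ∧ x = |netSupply b S|}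

/-- The support of an arc vector. -/
def suppE (φ : E → ℝ) : Set E := {e | φ e ≠ 0}

/-- An arc set is a forest in the underlying undirected graph:
equivalently, it supports no nonzero circulation. -/
def ForestSupport (tail head : E → V) (s : Set E) : Prop :=
  ∀ γ : E → ℝ, (incMatrix tail head).mulVec γ = 0 → (∀ e, γ e ≠ 0 → e ∈ s) → γ = 0

/-- A basic feasible solution: a positive flow whose support is a forest
in the underlying undirected graph. -/
def IsBFS (tail head : E → V) (b : V → ℝ) (f : E → ℝ) : Prop :=
  IsFlow tail head b f ∧ (∀ e, 0 ≤ f e) ∧ ForestSupport tail head (suppE f)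

/-- A vector is circulation free if its support contains no directed cycle:
equivalently, it supports no nonzero nonnegative circulation. -/
def CirculationFree (tail head : E → V) (φ : E → ℝ) : Prop :=
  ∀ γ : E → ℝ, (incMatrix tail head).mulVec γ = 0 → (∀ e, 0 ≤ γ e) →
    (∀ e, γ e ≠ 0 → φ e ≠ 0) → γ = 0

/-- The weighted graph Laplacian `L(σ) = B · diag(σ/ℓ) · Bᵀ`. -/
noncomputable def lap (tail head : E → V) (ℓ σ : E → ℝ) : Matrix V V ℝ :=
  incMatrix tail head * Matrix.diagonal (fun e => σ e / ℓ e) * (incMatrix tail head).transpose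

/-- The field (slope) of a potential: `Ψ(p)_{ij} = (p_i - p_j)/ℓ_{ij}`. -/
noncomputable def field (tail head : E → V) (ℓ : E → ℝ) (p : V → ℝ) : E → ℝ :=
  fun e => (p (tail e) - p (head e)) / ℓ e

/-- The set of vertices incident to an arc set `H`. -/
def VSet (tail head : E → V) (H : Set E) : Set V :=
  {i | ∃ e ∈ H, tail e = i ∨ head e = i}

/-- Undirected reachability using only arcs in `H`. -/
def UReach (tail head : E → V) (H : Set E) : V → V → Prop :=
  Relation.ReflTransGen
    (fun i j => ∃ e ∈ H, (tail e = i ∧ head e = j) ∨ (tail e = j ∧ head e = i))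

/-- `WalkLen tail head ℓ H i j L`: there is a walk in the underlying undirected
graph of `H` from `i` to `j` of total `ℓ`-length `L`. -/
inductive WalkLen (tail head : E → V) (ℓ : E → ℝ) (H : Set E) : V → V → ℝ → Prop
  | refl (i : V) : WalkLen tail head ℓ H i i 0
  | step {j k : V} {L : ℝ} (i : V) (e : E) (he : e ∈ H)
      (hik : (tail e = i ∧ head e = j) ∨ (tail e = j ∧ head e = i))
      (hw : WalkLen tail head ℓ H j k L) : WalkLen tail head ℓ H i k (ℓ e + L)

/-- The minimal `ℓ`-length of a connecting walk within `H`. -/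
noncomputable def wdist (tail head : E → V) (ℓ : E → ℝ) (H : Set E) (i j : V) : ℝ :=
  sInf {L | WalkLen tail head ℓ H i j L}

/-- The `ℓ`-diameter of `H`: the maximum of `wdist` over pairs of vertices lying in
a common component of `H`. -/
noncomputable def wdiam (tail head : E → V) (ℓ : E → ℝ) (H : Set E) : ℝ :=
  sSup {x | ∃ i j : V, (∃ L, WalkLen tail head ℓ H i j L) ∧ x = wdist tail head ℓ H i j}

/-- Maximum norm of `p` restricted to a vertex set `A`. -/
noncomputable def supNormOn (A : Set V) (p : V → ℝ) : ℝ := sSup {x | ∃ i ∈ A, x = |p i|}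

/-- Maximum norm of an arc vector. -/
noncomputable def eSupNorm (x : E → ℝ) : ℝ := sSup {r | ∃ e : E, r = |x e|}

/-- `min { σ_e : σ_e > 0 }`. -/
noncomputable def minPos (σ : E → ℝ) : ℝ := sInf {x | ∃ e, 0 < σ e ∧ x = σ e}

/-- `min_e ℓ_e`. -/
noncomputable def minLen (ℓ : E → ℝ) : ℝ := sInf {x | ∃ e : E, x = ℓ e}

/-- The cost `ℓᵀφ` of a flow. -/
def cost (ℓ φ : E → ℝ) : ℝ := ∑ e, ℓ e * φ e

/-- The transshipment problem is feasible: there is a positive flow. -/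
def Feasible (tail head : E → V) (b : V → ℝ) : Prop :=
  ∃ φ : E → ℝ, IsFlow tail head b φ ∧ ∀ e, 0 ≤ φ e

/-- `φ` is a minimum-cost positive flow. -/
def IsOptimal (tail head : E → V) (ℓ : E → ℝ) (b : V → ℝ) (φ : E → ℝ) : Prop :=
  IsFlow tail head b φ ∧ (∀ e, 0 ≤ φ e) ∧
    ∀ ψ : E → ℝ, IsFlow tail head b ψ → (∀ e, 0 ≤ ψ e) → cost ℓ φ ≤ cost ℓ ψ

/-- `Ĥ`: the set of arcs carried by some minimum-cost positive flow. -/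
def optSupport (tail head : E → V) (ℓ : E → ℝ) (b : V → ℝ) : Set E :=
  {e | ∃ φ : E → ℝ, IsOptimal tail head ℓ b φ ∧ 0 < φ e}

/-- The current `φ(t) = σ(t)·Ψ(p(t))` of the Physarum solver. -/
noncomputable def current (tail head : E → V) (ℓ : E → ℝ) (σ : ℝ → E → ℝ)
    (p : ℝ → V → ℝ) (t : ℝ) : E → ℝ :=
  fun e => σ t e * field tail head ℓ (p t) e

/-- The Physarum dynamics: `σ(t) > 0` and continuously differentiable on `[0,∞)`,
`L(σ(t)) p(t) = b`, and `σ' = φ - σ` where `φ(t) = σ(t)·Ψ(p(t))`. -/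
structure PhysarumDynamics (tail head : E → V) (ℓ : E → ℝ) (b : V → ℝ)
    (σ : ℝ → E → ℝ) (p : ℝ → V → ℝ) : Prop where
  pos : ∀ t : ℝ, 0 ≤ t → ∀ e, 0 < σ t e
  kirchhoff : ∀ t : ℝ, 0 ≤ t → (lap tail head ℓ (σ t)).mulVec (p t) = b
  contp : ContinuousOn (fun t => p t) (Set.Ici (0 : ℝ))
  dyn : ∀ t ∈ Set.Ici (0 : ℝ), ∀ e : E,
    HasDerivWithinAt (fun s => σ s e)
      (current tail head ℓ σ p t e - σ t e) (Set.Ici (0 : ℝ)) t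

/-- A directed walk from `i` to `j` using the listed arcs in order. -/
inductive DiWalk (tail head : E → V) : V → V → List E → Prop
  | nil (i : V) : DiWalk tail head i i []
  | cons {j k : V} {es : List E} (i : V) (e : E) (h1 : tail e = i) (h2 : head e = j)
      (hw : DiWalk tail head j k es) : DiWalk tail head i k (e :: es)

/-- Discrete `∞`-harmonicity of `p` at node `i` with respect to the arc set `H`:
the maximal in-slope equals the maximal out-slope, and both are nonnegative. -/
noncomputable def InfHarmAt (tail head : E → V) (ℓ : E → ℝ) (H : Set E)
    (p : V → ℝ) (i : V) : Prop :=
  sSup {r | ∃ e ∈ H, head e = i ∧ r = (p (tail e) - p i) / ℓ e}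
    = sSup {r | ∃ e ∈ H, tail e = i ∧ r = (p i - p (head e)) / ℓ e}
  ∧ 0 ≤ sSup {r | ∃ e ∈ H, tail e = i ∧ r = (p i - p (head e)) / ℓ e}

end PhysarumSetup


section Stmt3Aux

variable {V E : Type*} [Fintype V] [Fintype E] [DecidableEq V] [DecidableEq E]

open Module

/-- indicator vector of an arc -/
def sdelta (e : E) : E → ℝ := fun e' => if e' = e then 1 else 0

lemma inc_apply (tail head : E → V) (hloops : NoLoops tail head) (i : V) (e : E) :
    incMatrix tail head i e = (if tail e = i then (1:ℝ) else 0) - (if head e = i then 1 else 0) := by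
  simp only [incMatrix, Matrix.of_apply]
  by_cases h1 : tail e = i
  · have h2 : head e ≠ i := fun h => hloops e (h1.trans h.symm)
    simp [h1, h2]
  · by_cases h2 : head e = i <;> simp [h1, h2]

lemma mulVec_sdelta (tail head : E → V) (hloops : NoLoops tail head) (e : E) (v : V) :
    (incMatrix tail head).mulVec (sdelta e) v
      = (if v = tail e then (1:ℝ) else 0) - (if v = head e then 1 else 0) := by
  classical
  have : (incMatrix tail head).mulVec (sdelta e) v
      = ∑ e' : E, incMatrix tail head v e' * (if e' = e then 1 else 0) := by
    simp [Matrix.mulVec, dotProduct, sdelta]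
  rw [this]
  simp only [mul_ite, mul_one, mul_zero]
  rw [Finset.sum_ite_eq' Finset.univ e (fun e' => incMatrix tail head v e')]
  simp only [Finset.mem_univ, if_true]
  rw [inc_apply tail head hloops v e]
  congr 1 <;> simp [eq_comm]

lemma walk_boundary (tail head : E → V) (hloops : NoLoops tail head) (H : Set E) {i j : V}
    (h : UReach tail head H i j) :
    ∃ γ : E → ℝ, ((incMatrix tail head).mulVec γ
        = fun v => (if v = i then (1:ℝ) else 0) - (if v = j then 1 else 0))
      ∧ ∀ e, γ e ≠ 0 → e ∈ H := by
  induction h using Relation.ReflTransGen.head_induction_on with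
  | refl =>
      refine ⟨0, ?_, fun e h => absurd rfl h⟩
      funext v; simp [Matrix.mulVec_zero]
  | head hrel _h IH =>
      rename_i a c
      obtain ⟨e, heH, hor⟩ := hrel
      obtain ⟨γ, hγ1, hγ2⟩ := IH
      rcases hor with ⟨ht, hh⟩ | ⟨ht, hh⟩
      · refine ⟨γ + sdelta e, ?_, ?_⟩
        · funext v
          rw [Matrix.mulVec_add]
          have hd := mulVec_sdelta tail head hloops e v
          simp only [Pi.add_apply, hγ1, hd, ht, hh]
          ring
        · intro e' he'
          by_cases h' : e' = e
          · exact h' ▸ heH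
          · apply hγ2
            intro hz
            apply he'
            simp [Pi.add_apply, hz, sdelta, h']
      · -- tail e = c, head e = a ; subtract delta
        refine ⟨γ - sdelta e, ?_, ?_⟩
        · funext v
          rw [Matrix.mulVec_sub]
          have hd := mulVec_sdelta tail head hloops e v
          simp only [Pi.sub_apply, hγ1, hd, ht, hh]
          ring
        · intro e' he'
          by_cases h' : e' = e
          · exact h' ▸ heH
          · apply hγ2
            intro hz
            apply he'
            simp [Pi.sub_apply, hz, sdelta, h']

/-- Cut value of a forest arc: there is a vertex set with `b(S) = - f e₀`. -/
lemma bfs_cut (tail head : E → V) (hloops : NoLoops tail head) {b : V → ℝ} {f : E → ℝ}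
    (hf : IsBFS tail head b f) {e₀ : E} (he : f e₀ ≠ 0) :
    ∃ S : Finset V, netSupply b S = - f e₀ := by
  classical
  obtain ⟨hflow, hnn, hforest⟩ := hf
  set H : Set E := suppE f \ {e₀} with hH
  set S : Finset V := Finset.univ.filter (fun v => UReach tail head H (head e₀) v) with hS
  have hhead : head e₀ ∈ S := by
    simp only [hS, Finset.mem_filter, Finset.mem_univ, true_and]
    exact Relation.ReflTransGen.refl
  have htail : tail e₀ ∉ S := by
    intro hmem
    simp only [hS, Finset.mem_filter, Finset.mem_univ, true_and] at hmem
    obtain ⟨γ, hγ1, hγ2⟩ := walk_boundary tail head hloops H hmem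
    have hγe₀ : γ e₀ = 0 := by
      by_contra hne
      have := hγ2 e₀ hne
      simp [hH] at this
    have hB : (incMatrix tail head).mulVec (γ + sdelta e₀) = 0 := by
      funext v
      rw [Matrix.mulVec_add]
      have hd := mulVec_sdelta tail head hloops e₀ v
      simp only [Pi.add_apply, hγ1, hd, Pi.zero_apply]
      ring
    have hsupp : ∀ e, (γ + sdelta e₀) e ≠ 0 → e ∈ suppE f := by
      intro e hne
      by_cases h' : e = e₀
      · subst h'; exact he
      · have : γ e ≠ 0 := by
          intro hz; apply hne; simp [Pi.add_apply, hz, sdelta, h']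
        exact (hγ2 e this).1
    have hzero := hforest (γ + sdelta e₀) hB hsupp
    have : (γ + sdelta e₀) e₀ = 1 := by simp [Pi.add_apply, hγe₀, sdelta]
    rw [hzero] at this
    simp at this
  -- crossing closure
  have hcross : ∀ e, e ≠ e₀ → f e ≠ 0 → (tail e ∈ S ↔ head e ∈ S) := by
    intro e hne hfe
    have heH : e ∈ H := by simp [hH, suppE, hfe, hne]
    simp only [hS, Finset.mem_filter, Finset.mem_univ, true_and]
    constructor
    · intro hr
      exact hr.tail ⟨e, heH, Or.inl ⟨rfl, rfl⟩⟩
    · intro hr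
      exact hr.tail ⟨e, heH, Or.inr ⟨rfl, rfl⟩⟩
  refine ⟨S, ?_⟩
  have hb : ∀ i, b i = ∑ e : E, incMatrix tail head i e * f e := by
    intro i
    rw [← hflow]
    simp [Matrix.mulVec, dotProduct]
  calc netSupply b S = ∑ i ∈ S, ∑ e : E, incMatrix tail head i e * f e := by
        unfold netSupply; exact Finset.sum_congr rfl fun i _ => hb i
    _ = ∑ e : E, (∑ i ∈ S, incMatrix tail head i e) * f e := by
        rw [Finset.sum_comm]
        exact Finset.sum_congr rfl fun e _ => (Finset.sum_mul _ _ _).symm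
    _ = ∑ e : E, (((if tail e ∈ S then (1:ℝ) else 0) - (if head e ∈ S then 1 else 0)) * f e) := by
        refine Finset.sum_congr rfl fun e _ => ?_
        congr 1
        have : ∀ i ∈ S, incMatrix tail head i e
            = (if tail e = i then (1:ℝ) else 0) - (if head e = i then 1 else 0) :=
          fun i _ => inc_apply tail head hloops i e
        rw [Finset.sum_congr rfl this, Finset.sum_sub_distrib,
          Finset.sum_ite_eq S (tail e) (fun _ => (1:ℝ)),
          Finset.sum_ite_eq S (head e) (fun _ => (1:ℝ))]
    _ = - f e₀ := by
        rw [Finset.sum_eq_single e₀]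
        · simp [htail, hhead]
        · intro e _ hne
          by_cases hfe : f e = 0
          · simp [hfe]
          · have := hcross e hne hfe
            by_cases h1 : tail e ∈ S
            · have h2 : head e ∈ S := this.mp h1
              simp [h1, h2]
            · have h2 : head e ∉ S := fun h => h1 (this.mpr h)
              simp [h1, h2]
        · intro h; exact absurd (Finset.mem_univ e₀) h

/-- Peel a circulation off a flow, zeroing out some support arc. -/
lemma peel (tail head : E → V) {b : V → ℝ} {ψ γ : E → ℝ}
    (hflow : IsFlow tail head b ψ) (hnn : ∀ e, 0 ≤ ψ e)
    (hγB : (incMatrix tail head).mulVec γ = 0) (hγs : ∀ e, γ e ≠ 0 → ψ e ≠ 0)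
    {e' : E} (hpose : 0 < γ e') :
    ∃ θ : ℝ, 0 < θ ∧ IsFlow tail head b (ψ - θ • γ) ∧ (∀ e, 0 ≤ (ψ - θ • γ) e) ∧
      (∀ e, (ψ - θ • γ) e ≠ 0 → ψ e ≠ 0) ∧ ∃ e₁, ψ e₁ ≠ 0 ∧ (ψ - θ • γ) e₁ = 0 := by
  classical
  set P : Finset E := Finset.univ.filter (fun e => 0 < γ e) with hP
  have hPne : P.Nonempty := ⟨e', by simp [hP, hpose]⟩
  obtain ⟨e₁, he₁P, hmin⟩ := Finset.exists_min_image P (fun e => ψ e / γ e) hPne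
  have hγe₁ : 0 < γ e₁ := by simpa [hP] using he₁P
  have hψe₁ : 0 < ψ e₁ := (hnn e₁).lt_of_ne (Ne.symm (hγs e₁ (ne_of_gt hγe₁)))
  set θ : ℝ := ψ e₁ / γ e₁ with hθ
  have hθpos : 0 < θ := div_pos hψe₁ hγe₁
  refine ⟨θ, hθpos, ?_, ?_, ?_, ⟨e₁, ne_of_gt hψe₁, ?_⟩⟩
  · unfold IsFlow at hflow ⊢
    rw [Matrix.mulVec_sub, hflow, Matrix.mulVec_smul, hγB]
    simp
  · intro e
    simp only [Pi.sub_apply, Pi.smul_apply, smul_eq_mul, sub_nonneg]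
    by_cases hge : 0 < γ e
    · have hmem : e ∈ P := by simp [hP, hge]
      have := hmin e hmem
      calc θ * γ e ≤ (ψ e / γ e) * γ e := by
            exact mul_le_mul_of_nonneg_right this (le_of_lt hge)
        _ = ψ e := div_mul_cancel₀ _ (ne_of_gt hge)
    · push_neg at hge
      have : θ * γ e ≤ 0 := mul_nonpos_of_nonneg_of_nonpos (le_of_lt hθpos) hge
      exact this.trans (hnn e)
  · intro e hne
    intro hz
    apply hne
    have hγz : γ e = 0 := by
      by_contra h
      exact (hγs e h) hz
    simp [Pi.sub_apply, Pi.smul_apply, hz, hγz]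
  · simp only [Pi.sub_apply, Pi.smul_apply, smul_eq_mul, hθ]
    rw [div_mul_cancel₀ _ (ne_of_gt hγe₁)]
    ring

/-- Decomposition: a circulation-free-supported nonnegative flow lies in the convex hull of
the basic feasible solutions supported inside `supp φ`. -/
lemma decomp (tail head : E → V) (b : V → ℝ) (φ : E → ℝ)
    (hcf : CirculationFree tail head φ) (n : ℕ) :
    ∀ ψ : E → ℝ, IsFlow tail head b ψ → (∀ e, 0 ≤ ψ e) → (∀ e, ψ e ≠ 0 → φ e ≠ 0) →
      (Finset.univ.filter (fun e => ψ e ≠ 0)).card ≤ n →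
      ψ ∈ convexHull ℝ {f : E → ℝ | IsBFS tail head b f ∧ ∀ e, f e ≠ 0 → φ e ≠ 0} := by
  classical
  induction n with
  | zero =>
      intro ψ h1 h2 h3 hcard
      have hz : ∀ e, ψ e = 0 := by
        intro e
        by_contra hne
        have : e ∈ Finset.univ.filter (fun e => ψ e ≠ 0) := by simp [hne]
        have := Finset.card_pos.mpr ⟨e, this⟩
        omega
      have hforest : ForestSupport tail head (suppE ψ) := by
        intro γ _ hsup
        funext e
        by_contra hne
        exact (hsup e hne) (hz e)
      exact subset_convexHull ℝ _ ⟨⟨h1, h2, hforest⟩, h3⟩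
  | succ n IH =>
      intro ψ h1 h2 h3 hcard
      by_cases hfor : ForestSupport tail head (suppE ψ)
      · exact subset_convexHull ℝ _ ⟨⟨h1, h2, hfor⟩, h3⟩
      · unfold ForestSupport at hfor
        push_neg at hfor
        obtain ⟨γ, hγB, hγs, hγne⟩ := hfor
        have hγs' : ∀ e, γ e ≠ 0 → ψ e ≠ 0 := fun e h => hγs e h
        -- γ has a positive entry
        have hposent : ∃ e, 0 < γ e := by
          by_contra hno
          push_neg at hno
          have := hcf (-γ) (by rw [Matrix.mulVec_neg, hγB, neg_zero])
            (fun e => by simpa using hno e)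
            (fun e h => h3 e (hγs' e (by simpa using h)))
          apply hγne
          funext e
          have := congrFun this e
          simpa using this
        have hnegent : ∃ e, 0 < (-γ) e := by
          by_contra hno
          push_neg at hno
          have := hcf γ hγB (fun e => by have := hno e; simpa using this)
            (fun e h => h3 e (hγs' e h))
          exact hγne this
        obtain ⟨ea, hea⟩ := hposent
        obtain ⟨eb, heb⟩ := hnegent
        obtain ⟨θ₁, hθ₁, hf₁, hnn₁, hs₁, e₁, he₁ψ, he₁z⟩ :=
          peel tail head h1 h2 hγB hγs' hea
        have hγB' : (incMatrix tail head).mulVec (-γ) = 0 := by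
          rw [Matrix.mulVec_neg, hγB, neg_zero]
        have hγs'' : ∀ e, (-γ) e ≠ 0 → ψ e ≠ 0 := fun e h => hγs' e (by simpa using h)
        obtain ⟨θ₂, hθ₂, hf₂, hnn₂, hs₂, e₂, he₂ψ, he₂z⟩ :=
          peel tail head h1 h2 hγB' hγs'' heb
        set ψ₁ : E → ℝ := ψ - θ₁ • γ with hψ₁
        set ψ₂ : E → ℝ := ψ - θ₂ • (-γ) with hψ₂
        have hcard₁ : (Finset.univ.filter (fun e => ψ₁ e ≠ 0)).card ≤ n := by
          have hss : Finset.univ.filter (fun e => ψ₁ e ≠ 0)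
              ⊂ Finset.univ.filter (fun e => ψ e ≠ 0) := by
            constructor
            · intro e he
              simp only [Finset.mem_filter, Finset.mem_univ, true_and] at he ⊢
              exact hs₁ e he
            · intro hsub
              have : e₁ ∈ Finset.univ.filter (fun e => ψ e ≠ 0) := by simp [he₁ψ]
              have := hsub this
              simp only [Finset.mem_filter, Finset.mem_univ, true_and] at this
              exact this he₁z
          have := Finset.card_lt_card hss
          omega
        have hcard₂ : (Finset.univ.filter (fun e => ψ₂ e ≠ 0)).card ≤ n := by
          have hss : Finset.univ.filter (fun e => ψ₂ e ≠ 0)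
              ⊂ Finset.univ.filter (fun e => ψ e ≠ 0) := by
            constructor
            · intro e he
              simp only [Finset.mem_filter, Finset.mem_univ, true_and] at he ⊢
              exact hs₂ e he
            · intro hsub
              have : e₂ ∈ Finset.univ.filter (fun e => ψ e ≠ 0) := by simp [he₂ψ]
              have := hsub this
              simp only [Finset.mem_filter, Finset.mem_univ, true_and] at this
              exact this he₂z
          have := Finset.card_lt_card hss
          omega
        have hm₁ := IH ψ₁ hf₁ hnn₁ (fun e h => h3 e (hs₁ e h)) hcard₁
        have hm₂ := IH ψ₂ hf₂ hnn₂ (fun e h => h3 e (hs₂ e h)) hcard₂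
        have hθsum : (0:ℝ) < θ₁ + θ₂ := by linarith
        set α : ℝ := θ₂ / (θ₁ + θ₂) with hα
        set β : ℝ := θ₁ / (θ₁ + θ₂) with hβ
        have hαβ : α + β = 1 := by
          rw [hα, hβ, ← add_div, add_comm θ₂ θ₁, div_self (ne_of_gt hθsum)]
        have hα0 : 0 ≤ α := le_of_lt (div_pos hθ₂ hθsum)
        have hβ0 : 0 ≤ β := le_of_lt (div_pos hθ₁ hθsum)
        have hcomb : ψ = α • ψ₁ + β • ψ₂ := by
          funext e
          simp only [Pi.add_apply, Pi.smul_apply, Pi.sub_apply, Pi.neg_apply,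
            smul_eq_mul, hψ₁, hψ₂, hα, hβ]
          field_simp
          ring
        rw [hcomb]
        exact (convex_convexHull ℝ _) hm₁ hm₂ hα0 hβ0 hαβ


set_option maxHeartbeats 1000000 in
set_option synthInstance.maxHeartbeats 400000 in
lemma card_bound (tail head : E → V) (hloops : NoLoops tail head)
    (b : V → ℝ) (φ : E → ℝ) (ab : E) (hab : φ ab ≠ 0)
    (t : Finset (E → ℝ))
    (hts : ↑t ⊆ {f : E → ℝ | IsBFS tail head b f ∧ ∀ e, f e ≠ 0 → φ e ≠ 0})
    (hne : t.Nonempty)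
    (hai : AffineIndependent ℝ (Subtype.val : {x // x ∈ (t : Set (E → ℝ))} → E → ℝ)) :
    t.card ≤ (Finset.univ.filter (fun e => φ e ≠ 0)).card := by
  classical
  obtain ⟨k₀, hk₀⟩ := hne
  set i0 : {x // x ∈ (t : Set (E → ℝ))} := ⟨k₀, by simpa using hk₀⟩ with hi0
  rw [affineIndependent_iff_linearIndependent_vsub ℝ _ i0] at hai
  set π : (E → ℝ) →ₗ[ℝ] ({e : E // φ e = 0} → ℝ) :=
    LinearMap.pi (fun e => LinearMap.proj e.1) with hπ
  set M : (E → ℝ) →ₗ[ℝ] ℝ :=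
    (LinearMap.proj (tail ab)) ∘ₗ (incMatrix tail head).mulVecLin with hM
  set N : (E → ℝ) →ₗ[ℝ] (({e : E // φ e = 0} → ℝ) × ℝ) := π.prod M with hN
  have hMδ : M (sdelta ab) = 1 := by
    have hmv := mulVec_sdelta tail head hloops ab (tail ab)
    have hth : tail ab ≠ head ab := hloops ab
    simp only [hM, LinearMap.coe_comp, Function.comp_apply, LinearMap.proj_apply,
      Matrix.mulVecLin_apply]
    rw [hmv]
    simp [hth]
  have hπδ : π (sdelta ab) = 0 := by
    funext e'
    have : e'.1 ≠ ab := fun h => hab (h ▸ e'.2)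
    simp [hπ, sdelta, this]
  have hNsurj : Function.Surjective N := by
    rintro ⟨x, r⟩
    set g₀ : E → ℝ := fun e => if h : φ e = 0 then x ⟨e, h⟩ else 0 with hg₀
    have hπg₀ : π g₀ = x := by
      funext e'
      simp [hπ, hg₀, e'.2]
    refine ⟨g₀ + (r - M g₀) • sdelta ab, ?_⟩
    simp only [hN, LinearMap.prod_apply, Pi.prod, map_add, map_smul, hπg₀, hπδ, hMδ,
      smul_zero, add_zero, smul_eq_mul, mul_one, Prod.ext_iff, Prod.fst_add, Prod.snd_add,
      Prod.smul_mk, Prod.mk_add_mk]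
    constructor
    · simp [hπg₀, hπδ]
    · simp [hMδ]
  have hrank := LinearMap.finrank_range_add_finrank_ker N
  rw [LinearMap.range_eq_top.mpr hNsurj, finrank_top] at hrank
  have hfr1 : finrank ℝ (({e : E // φ e = 0} → ℝ) × ℝ)
      = Fintype.card {e : E // φ e = 0} + 1 := by
    rw [Module.finrank_prod, Module.finrank_pi, Module.finrank_self]
  have hfr2 : finrank ℝ (E → ℝ) = Fintype.card E := Module.finrank_pi ℝ
  have hcards : Fintype.card {e : E // φ e = 0}
      + (Finset.univ.filter (fun e => φ e ≠ 0)).card = Fintype.card E := by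
    rw [Fintype.card_subtype]
    have := Finset.card_filter_add_card_filter_not
      (s := (Finset.univ : Finset E)) (p := fun e => φ e = 0)
    simpa using this
  -- every difference vector lies in ker N
  have humem : ∀ i : {x : {x // x ∈ (t : Set (E → ℝ))} // x ≠ i0},
      (Subtype.val i.1) -ᵥ (Subtype.val i0) ∈ LinearMap.ker N := by
    intro i
    obtain ⟨hb1, hs1⟩ := hts i.1.2
    obtain ⟨hb2, hs2⟩ := hts i0.2
    rw [LinearMap.mem_ker]
    have hvs : (Subtype.val i.1) -ᵥ (Subtype.val i0)
        = (Subtype.val i.1) - (Subtype.val i0) := rfl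
    rw [hvs]
    have hπu : π ((Subtype.val i.1) - (Subtype.val i0)) = 0 := by
      funext e'
      have h1 : (Subtype.val i.1 : E → ℝ) e'.1 = 0 := by
        by_contra h
        exact (hs1 _ h) e'.2
      have h2 : (Subtype.val i0 : E → ℝ) e'.1 = 0 := by
        by_contra h
        exact (hs2 _ h) e'.2
      have hr : ((Subtype.val i.1 - Subtype.val i0 : E → ℝ)) e'.1
          = (Subtype.val i.1 : E → ℝ) e'.1 - (Subtype.val i0 : E → ℝ) e'.1 := rfl
      simp only [hπ, LinearMap.pi_apply, LinearMap.proj_apply, Pi.zero_apply]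
      rw [hr, h1, h2]
      norm_num
    have hMu : M ((Subtype.val i.1) - (Subtype.val i0)) = 0 := by
      simp only [hM, LinearMap.coe_comp, Function.comp_apply, LinearMap.proj_apply,
        Matrix.mulVecLin_apply]
      rw [Matrix.mulVec_sub, hb1.1, hb2.1]
      simp
    simp [hN, LinearMap.prod_apply, Pi.prod, hπu, hMu, Prod.ext_iff]
  have hsple : Submodule.span ℝ (Set.range fun i : {x : {x // x ∈ (t : Set (E → ℝ))} // x ≠ i0}
      => (Subtype.val i.1) -ᵥ (Subtype.val i0)) ≤ LinearMap.ker N := by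
    rw [Submodule.span_le]
    rintro x ⟨i, rfl⟩
    exact humem i
  haveI : Fintype {x // x ∈ (t : Set (E → ℝ))} := (t.finite_toSet).fintype
  have hspan := finrank_span_eq_card hai
  have hmono := Submodule.finrank_mono hsple
  rw [hspan] at hmono
  -- cardinalities
  have hcard1 : Fintype.card {x : {x // x ∈ (t : Set (E → ℝ))} // x ≠ i0}
      = Fintype.card {x // x ∈ (t : Set (E → ℝ))} - 1 := by
    rw [Fintype.card_subtype_compl, Fintype.card_subtype_eq]
  have hcard2 : Fintype.card {x // x ∈ (t : Set (E → ℝ))} = t.card := by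
    have e := Equiv.subtypeEquivRight (fun x : E → ℝ => (Finset.mem_coe : x ∈ (t : Set (E → ℝ)) ↔ x ∈ t))
    rw [Fintype.card_congr e]
    exact Fintype.card_coe t
  have htpos : 0 < t.card := Finset.card_pos.mpr ⟨k₀, hk₀⟩
  have hsFpos : 0 < (Finset.univ.filter (fun e => φ e ≠ 0)).card :=
    Finset.card_pos.mpr ⟨ab, by simp [hab]⟩
  rw [hcard1, hcard2] at hmono
  rw [hfr1, hfr2] at hrank
  omega

end Stmt3Aux

theorem statement_3 {V E : Type*} [Fintype V] [Fintype E] [DecidableEq V] [DecidableEq E]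
    (tail head : E → V)
    (hloops : NoLoops tail head) (hmult : NoMultiple tail head)
    (hconn : IsConnectedGraph tail head)
    (b : V → ℝ) (hb : ∑ i, b i = 0)
    (φ : E → ℝ) (hflow : IsFlow tail head b φ) (hpos : ∀ e, 0 ≤ φ e)
    (hcf : CirculationFree tail head φ)
    (ab : E) (hab : φ ab ≠ 0) :
    ∃ f : E → ℝ, IsBFS tail head b f ∧ 0 < f ab ∧
      ∀ e : E, f e ≠ 0 →
        bstarMin b / bstarMax b * (φ ab / ((suppE φ).ncard : ℝ)) ≤ φ e := by
  classical
  have habpos : 0 < φ ab := (hpos ab).lt_of_ne (Ne.symm hab)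
  set sF : Finset E := Finset.univ.filter (fun e => φ e ≠ 0) with hsF
  have habs : ab ∈ sF := by simp [hsF, hab]
  have hsFpos : 0 < sF.card := Finset.card_pos.mpr ⟨ab, habs⟩
  have hdec := decomp tail head b φ hcf sF.card φ hflow hpos (fun e h => h) le_rfl
  rw [convexHull_eq_union] at hdec
  simp only [Set.mem_iUnion] at hdec
  obtain ⟨t, hts, hai, hφt⟩ := hdec
  rw [Finset.mem_convexHull] at hφt
  obtain ⟨w, hw0, hw1, hcm⟩ := hφt
  rw [Finset.centerMass_eq_of_sum_1 t id hw1] at hcm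
  have hsum : ∀ e, φ e = ∑ k ∈ t, w k * k e := by
    intro e
    rw [← hcm]
    rw [Finset.sum_apply]
    exact Finset.sum_congr rfl fun k _ => rfl
  have htne : t.Nonempty := by
    rcases Finset.eq_empty_or_nonempty t with h | h
    · exfalso
      have := hsum ab
      rw [h, Finset.sum_empty] at this
      exact hab this
    · exact h
  obtain ⟨kstar, hkt, hmax⟩ := Finset.exists_max_image t (fun k => w k * k ab) htne
  have hkmem := hts (Finset.mem_coe.mpr hkt)
  obtain ⟨hkbfs, hksupp⟩ := hkmem
  have hcardle := card_bound tail head hloops b φ ab hab t hts htne hai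
  -- the maximal term is large
  have hX0' : 0 ≤ w kstar * kstar ab := mul_nonneg (hw0 kstar hkt) (hkbfs.2.1 ab)
  have h1 : φ ab ≤ (sF.card : ℝ) * (w kstar * kstar ab) := by
    have h1' : φ ab ≤ (t.card : ℝ) * (w kstar * kstar ab) := by
      rw [hsum ab]
      have := Finset.sum_le_card_nsmul t (fun k => w k * k ab) (w kstar * kstar ab)
        (fun x hx => hmax x hx)
      simpa [nsmul_eq_mul] using this
    refine h1'.trans ?_
    apply mul_le_mul_of_nonneg_right _ hX0'
    exact_mod_cast hcardle
  have hA : 0 < φ ab / (sF.card : ℝ) := div_pos habpos (by exact_mod_cast hsFpos)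
  have h2 : φ ab / (sF.card : ℝ) ≤ w kstar * kstar ab := by
    rw [div_le_iff₀ (by exact_mod_cast hsFpos)]
    calc φ ab ≤ (sF.card : ℝ) * (w kstar * kstar ab) := h1
      _ = w kstar * kstar ab * (sF.card : ℝ) := by ring
  have hX0 : 0 < w kstar * kstar ab := lt_of_lt_of_le hA h2
  have hkab : 0 < kstar ab := by
    rcases lt_or_ge 0 (kstar ab) with h | h
    · exact h
    · exfalso
      have : w kstar * kstar ab ≤ 0 := mul_nonpos_of_nonneg_of_nonpos (hw0 kstar hkt) h
      linarith
  have hwpos : 0 < w kstar := by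
    rcases lt_or_ge 0 (w kstar) with h | h
    · exact h
    · exfalso
      have : w kstar * kstar ab ≤ 0 := mul_nonpos_of_nonpos_of_nonneg h (le_of_lt hkab)
      linarith
  -- cut bounds for bfs values
  have hfin : {x | ∃ S : Finset V, netSupply b S ≠ 0 ∧ x = |netSupply b S|}.Finite := by
    apply Set.Finite.subset (Set.finite_range (fun S : Finset V => |netSupply b S|))
    rintro x ⟨S', _, rfl⟩
    exact ⟨S', rfl⟩
  have hfin2 : {x | ∃ S : Finset V, x = |netSupply b S|}.Finite := by
    apply Set.Finite.subset (Set.finite_range (fun S : Finset V => |netSupply b S|))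
    rintro x ⟨S', rfl⟩
    exact ⟨S', rfl⟩
  have hcut : ∀ e, kstar e ≠ 0 → bstarMin b ≤ kstar e ∧ kstar e ≤ bstarMax b := by
    intro e he
    have hpose : 0 < kstar e := (hkbfs.2.1 e).lt_of_ne (Ne.symm he)
    obtain ⟨S, hSn⟩ := bfs_cut tail head hloops hkbfs he
    have habsS : |netSupply b S| = kstar e := by
      rw [hSn, abs_neg, abs_of_pos hpose]
    have hSne : netSupply b S ≠ 0 := by
      rw [hSn]
      simpa using ne_of_gt hpose
    constructor
    · exact csInf_le hfin.bddBelow ⟨S, hSne, habsS.symm⟩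
    · exact le_csSup hfin2.bddAbove ⟨S, habsS.symm⟩
  have hbmax_pos : 0 < bstarMax b := lt_of_lt_of_le hkab (hcut ab (ne_of_gt hkab)).2
  have hbmin_nn : 0 ≤ bstarMin b := by
    apply Real.sInf_nonneg
    rintro x ⟨S, _, rfl⟩
    exact abs_nonneg _
  refine ⟨kstar, hkbfs, hkab, ?_⟩
  intro e he
  have hncard : ((suppE φ).ncard : ℝ) = (sF.card : ℝ) := by
    norm_cast
    rw [← Set.ncard_coe_finset]
    congr 1
    ext x
    simp [hsF, suppE]
  rw [hncard]
  have hterm : w kstar * kstar e ≤ φ e := by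
    rw [hsum e]
    exact Finset.single_le_sum
      (fun k hk => mul_nonneg (hw0 k hk) ((hts (Finset.mem_coe.mpr hk)).1.2.1 e)) hkt
  have hcutk := hcut e he
  have hwlb : (φ ab / (sF.card : ℝ)) / bstarMax b ≤ w kstar := by
    rw [div_le_iff₀ hbmax_pos]
    calc φ ab / (sF.card : ℝ) ≤ w kstar * kstar ab := h2
      _ ≤ w kstar * bstarMax b :=
        mul_le_mul_of_nonneg_left (hcut ab (ne_of_gt hkab)).2 (le_of_lt hwpos)
  have hfinal : bstarMin b / bstarMax b * (φ ab / (sF.card : ℝ)) ≤ w kstar * kstar e := by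
    have heq : bstarMin b / bstarMax b * (φ ab / (sF.card : ℝ))
        = ((φ ab / (sF.card : ℝ)) / bstarMax b) * bstarMin b := by
      ring
    rw [heq]
    exact mul_le_mul hwlb hcutk.1 hbmin_nn (le_of_lt hwpos)
  linarith
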